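/- Let 1 ≤ q < p < ∞. Every bounded linear operator from ℓ_p to ℓ_q is compact. -/

import Mathlib

set_option linter.unusedSectionVars false
set_option linter.unusedVariables false
set_option maxHeartbeats 2000000

open scoped ENNReal
open Filter Topology Metric

namespace PittAux

local notation "L" r => lp (fun _ : ℕ => ℝ) r

section RealLemmas

/-- `t ↦ (t+y)^r − t^r` is monotone on `[0, ∞)` for `r ≥ 1`, `y ≥ 0`. -/
lemma mono_aux {r y : ℝ} (hr : 1 ≤ r) (hy : 0 ≤ y) :
    MonotoneOn (fun t : ℝ => (t + y) ^ r - t ^ r) (Set.Ici 0) := by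
  have hr0 : 0 < r := lt_of_lt_of_le one_pos hr
  refine monotoneOn_of_deriv_nonneg (convex_Ici 0) ?_ ?_ ?_
  · apply ContinuousOn.sub
    · refine ContinuousOn.rpow_const (by fun_prop) ?_
      intro t _; right; exact hr0.le
    · refine ContinuousOn.rpow_const (by fun_prop) ?_
      intro t _; right; exact hr0.le
  · rw [interior_Ici]
    intro t ht
    have ht' : (0:ℝ) < t := ht
    have h1 : HasDerivAt (fun t : ℝ => (t + y) ^ r - t ^ r)
        (1 * r * (t + y) ^ (r - 1) - 1 * r * t ^ (r - 1)) t := by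
      refine HasDerivAt.sub ?_ ?_
      · exact (((hasDerivAt_id t).add_const y).rpow_const
          (Or.inl (by positivity)))
      · exact ((hasDerivAt_id t).rpow_const (Or.inl ht'.ne'))
    exact h1.differentiableAt.differentiableWithinAt
  · rw [interior_Ici]
    intro t ht
    have ht' : (0:ℝ) < t := ht
    have h1 : HasDerivAt (fun t : ℝ => (t + y) ^ r - t ^ r)
        (1 * r * (t + y) ^ (r - 1) - 1 * r * t ^ (r - 1)) t := by
      refine HasDerivAt.sub ?_ ?_
      · exact (((hasDerivAt_id t).add_const y).rpow_const
          (Or.inl (by positivity)))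
      · exact ((hasDerivAt_id t).rpow_const (Or.inl ht'.ne'))
    rw [h1.deriv]
    have : t ^ (r - 1) ≤ (t + y) ^ (r - 1) :=
      Real.rpow_le_rpow ht'.le (by linarith) (by linarith)
    nlinarith

/-- Key Lipschitz-type inequality: `((x+y)^r + c)^(1/r) ≤ (x^r + c)^(1/r) + y`. -/
lemma rpow_lip {r c x y : ℝ} (hr : 1 ≤ r) (hc : 0 ≤ c) (hx : 0 ≤ x) (hy : 0 ≤ y) :
    ((x + y) ^ r + c) ^ (1 / r) ≤ (x ^ r + c) ^ (1 / r) + y := by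
  have hr0 : 0 < r := lt_of_lt_of_le one_pos hr
  set u : ℝ := (x ^ r + c) ^ (1 / r) with hu
  have hxr : (0:ℝ) ≤ x ^ r := Real.rpow_nonneg hx r
  have hu0 : 0 ≤ u := Real.rpow_nonneg (by linarith) _
  have hur : u ^ r = x ^ r + c := by
    rw [hu, one_div, Real.rpow_inv_rpow (by linarith) hr0.ne']
  have hxu : x ≤ u := by
    have : x ^ r ≤ u ^ r := by rw [hur]; linarith
    exact (Real.rpow_le_rpow_iff hx hu0 hr0).mp this
  have hkey : (x + y) ^ r - x ^ r ≤ (u + y) ^ r - u ^ r :=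
    mono_aux hr hy (Set.mem_Ici.mpr hx) (Set.mem_Ici.mpr hu0) hxu
  have h2 : (x + y) ^ r + c ≤ (u + y) ^ r := by nlinarith [hkey, hur]
  calc ((x + y) ^ r + c) ^ (1 / r) ≤ ((u + y) ^ r) ^ (1 / r) :=
        Real.rpow_le_rpow (by positivity) h2 (by positivity)
    _ = u + y := by rw [one_div, Real.rpow_rpow_inv (by linarith) hr0.ne']

/-- For `0 < t < s`, `a > 0`: eventually `c·N^t + d < a·N^s`. -/
lemma exists_nat_big {a c d s t : ℝ} (ha : 0 < a) (ht : 0 < t) (hts : t < s) :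
    ∃ N : ℕ, c * (N:ℝ) ^ t + d < a * (N:ℝ) ^ s := by
  have h1 : Tendsto (fun N : ℕ => (N:ℝ) ^ t) atTop atTop :=
    (tendsto_rpow_atTop ht).comp tendsto_natCast_atTop_atTop
  have h2 : Tendsto (fun N : ℕ => a * (N:ℝ) ^ (s - t) - c) atTop atTop := by
    apply tendsto_atTop_add_const_right
    exact Tendsto.const_mul_atTop ha
      ((tendsto_rpow_atTop (by linarith)).comp tendsto_natCast_atTop_atTop)
  have h3 : Tendsto (fun N : ℕ => (N:ℝ) ^ t * (a * (N:ℝ) ^ (s - t) - c)) atTop atTop :=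
    h1.atTop_mul_atTop₀ h2
  have heq : ∀ᶠ N : ℕ in atTop,
      (N:ℝ) ^ t * (a * (N:ℝ) ^ (s - t) - c) = a * (N:ℝ) ^ s - c * (N:ℝ) ^ t := by
    filter_upwards [eventually_ge_atTop 1] with N hN
    have hN' : (0:ℝ) < (N:ℝ) := by exact_mod_cast hN
    have : (N:ℝ) ^ t * (N:ℝ) ^ (s - t) = (N:ℝ) ^ s := by
      rw [← Real.rpow_add hN']; ring_nf
    nlinarith [this]
  have h4 : Tendsto (fun N : ℕ => a * (N:ℝ) ^ s - c * (N:ℝ) ^ t) atTop atTop :=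
    h3.congr' heq
  obtain ⟨N, hN⟩ := (h4.eventually_gt_atTop d).exists
  exact ⟨N, by linarith⟩

end RealLemmas

section Trunc

variable {r : ℝ≥0∞} [Fact (1 ≤ r)]

/-- Truncation to the first `M` coordinates. -/
noncomputable def trunc (r : ℝ≥0∞) (M : ℕ) (f : L r) : L r :=
  ∑ i ∈ Finset.range M, lp.single r i (f i)

lemma trunc_apply (M : ℕ) (f : L r) (j : ℕ) :
    trunc r M f j = if j < M then f j else 0 := by
  have : ∀ i ∈ Finset.range M, ∀ (j : ℕ),
      (lp.single r i (f i) : ∀ _ : ℕ, ℝ) j = if j = i then f i else 0 := by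
    intro i _ j
    by_cases h : j = i
    · subst h; simp [lp.single_apply_self]
    · simp [lp.single_apply_ne r i _ h, h]
  rw [trunc, lp.coeFn_sum]
  simp only [Finset.sum_apply]
  rw [Finset.sum_congr rfl (fun i hi => this i hi j)]
  simp [Finset.sum_ite_eq, Finset.mem_range]

lemma norm_trunc_rpow (hr : 0 < r.toReal) (M : ℕ) (f : L r) :
    ‖trunc r M f‖ ^ r.toReal = ∑ i ∈ Finset.range M, ‖f i‖ ^ r.toReal :=
  lp.norm_sum_single hr _ _

lemma norm_sub_trunc_rpow (hr : 0 < r.toReal) (M : ℕ) (f : L r) :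
    ‖f - trunc r M f‖ ^ r.toReal = ‖f‖ ^ r.toReal - ∑ i ∈ Finset.range M, ‖f i‖ ^ r.toReal :=
  lp.norm_compl_sum_single hr f _

lemma norm_trunc_le (hr : 0 < r.toReal) (M : ℕ) (f : L r) :
    ‖trunc r M f‖ ≤ ‖f‖ := by
  rw [← Real.rpow_le_rpow_iff (norm_nonneg _) (norm_nonneg _) hr, norm_trunc_rpow hr]
  exact lp.sum_rpow_le_norm_rpow hr f _

lemma norm_sub_trunc_le (hr : 0 < r.toReal) (M : ℕ) (f : L r) :
    ‖f - trunc r M f‖ ≤ ‖f‖ := by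
  rw [← Real.rpow_le_rpow_iff (norm_nonneg _) (norm_nonneg _) hr, norm_sub_trunc_rpow hr]
  have : 0 ≤ ∑ i ∈ Finset.range M, ‖f i‖ ^ r.toReal :=
    Finset.sum_nonneg fun i _ => Real.rpow_nonneg (norm_nonneg _) _
  linarith

/-- The tail of an `ℓ^r` element is eventually small. -/
lemma exists_norm_sub_trunc_le (hr : 0 < r.toReal) (f : L r) {η : ℝ} (hη : 0 < η) :
    ∃ M : ℕ, ‖f - trunc r M f‖ ≤ η := by
  have hsum := lp.hasSum_norm hr f
  have := hsum.tendsto_sum_nat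
  have hev : ∀ᶠ M in atTop, ‖f‖ ^ r.toReal - ∑ i ∈ Finset.range M, ‖f i‖ ^ r.toReal
      < η ^ r.toReal := by
    have hpos : 0 < η ^ r.toReal := Real.rpow_pos_of_pos hη _
    have := this.eventually (eventually_gt_nhds (by linarith : ‖f‖ ^ r.toReal - η ^ r.toReal
        < ‖f‖ ^ r.toReal))
    filter_upwards [this] with M hM
    linarith
  obtain ⟨M, hM⟩ := hev.exists
  refine ⟨M, ?_⟩
  rw [← Real.rpow_le_rpow_iff (norm_nonneg _) hη.le hr, norm_sub_trunc_rpow hr]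
  linarith

/-- If the coordinates of a sequence tend to zero, the truncations tend to zero in norm. -/
lemma tendsto_norm_trunc (hr : 0 < r.toReal) (M : ℕ) {u : ℕ → L r}
    (hu : ∀ i, Tendsto (fun n => u n i) atTop (𝓝 (0 : ℝ))) :
    Tendsto (fun n => ‖trunc r M (u n)‖) atTop (𝓝 0) := by
  have hle : ∀ n, ‖trunc r M (u n)‖ ≤ ∑ i ∈ Finset.range M, ‖u n i‖ := by
    intro n
    refine (norm_sum_le _ _).trans_eq ?_
    exact Finset.sum_congr rfl fun i _ => lp.norm_single (ENNReal.toReal_pos_iff.mp hr).1 i _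
  have hsum : Tendsto (fun n => ∑ i ∈ Finset.range M, ‖u n i‖) atTop (𝓝 0) := by
    have : Tendsto (fun n => ∑ i ∈ Finset.range M, ‖u n i‖) atTop
        (𝓝 (∑ i ∈ Finset.range M, ‖(0 : ℝ)‖)) :=
      tendsto_finset_sum _ fun i _ => ((hu i).norm)
    simpa using this
  exact squeeze_zero (fun n => norm_nonneg _) hle hsum

/-- Disjointly supported elements: norms add with power `r`. -/
lemma norm_add_rpow_of_disjoint (hr : 0 < r.toReal) (f g : L r)
    (h : ∀ i, f i = 0 ∨ g i = 0) :
    ‖f + g‖ ^ r.toReal = ‖f‖ ^ r.toReal + ‖g‖ ^ r.toReal := by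
  have hf := lp.hasSum_norm hr f
  have hg := lp.hasSum_norm hr g
  have hfg := lp.hasSum_norm hr (f + g)
  have hpt : ∀ i, ‖(f + g) i‖ ^ r.toReal = ‖f i‖ ^ r.toReal + ‖g i‖ ^ r.toReal := by
    intro i
    have : (f + g) i = f i + g i := by rw [lp.coeFn_add]; rfl
    rcases h i with h0 | h0 <;>
      simp [this, h0, Real.zero_rpow hr.ne']
  have hadd := hf.add hg
  rw [show (fun i => ‖f i‖ ^ r.toReal + ‖g i‖ ^ r.toReal)
      = fun i => ‖(f + g) i‖ ^ r.toReal from funext fun i => (hpt i).symm] at hadd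
  exact hfg.unique hadd

lemma disjoint_trunc_tail (M : ℕ) (f g : L r) (i : ℕ) :
    trunc r M f i = 0 ∨ (g - trunc r M g) i = 0 := by
  by_cases h : i < M
  · right
    have : (g - trunc r M g) i = g i - trunc r M g i := by rw [lp.coeFn_sub]; rfl
    rw [this, trunc_apply, if_pos h, sub_self]
  · left
    rw [trunc_apply, if_neg h]

/-- Upper `ℓ^r` estimate: adding a bounded coordinatewise-null sequence. -/
lemma eventually_norm_add_le (hr : 0 < r.toReal) (z : L r) {u : ℕ → L r} {C : ℝ}
    (hC : 0 ≤ C) (hCu : ∀ n, ‖u n‖ ≤ C)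
    (hu : ∀ i, Tendsto (fun n => u n i) atTop (𝓝 (0 : ℝ))) {η : ℝ} (hη : 0 < η) :
    ∀ᶠ n in atTop, ‖z + u n‖ ≤ (‖z‖ ^ r.toReal + C ^ r.toReal) ^ (1 / r.toReal) + 2 * η := by
  obtain ⟨M, hM⟩ := exists_norm_sub_trunc_le hr z hη
  have hev : ∀ᶠ n in atTop, ‖trunc r M (u n)‖ ≤ η :=
    (tendsto_norm_trunc hr M hu).eventually (eventually_le_nhds hη)
  filter_upwards [hev] with n hn
  have key : ‖trunc r M z + (u n - trunc r M (u n))‖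
      ≤ (‖z‖ ^ r.toReal + C ^ r.toReal) ^ (1 / r.toReal) := by
    have hdisj := norm_add_rpow_of_disjoint hr (trunc r M z) (u n - trunc r M (u n))
      (disjoint_trunc_tail M z (u n))
    have h1 : ‖trunc r M z‖ ^ r.toReal ≤ ‖z‖ ^ r.toReal :=
      Real.rpow_le_rpow (norm_nonneg _) (norm_trunc_le hr M z) hr.le
    have h2 : ‖u n - trunc r M (u n)‖ ^ r.toReal ≤ C ^ r.toReal :=
      Real.rpow_le_rpow (norm_nonneg _) ((norm_sub_trunc_le hr M (u n)).trans (hCu n)) hr.le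
    have h3 : ‖trunc r M z + (u n - trunc r M (u n))‖ ^ r.toReal
        ≤ ‖z‖ ^ r.toReal + C ^ r.toReal := by rw [hdisj]; linarith
    calc ‖trunc r M z + (u n - trunc r M (u n))‖
        = (‖trunc r M z + (u n - trunc r M (u n))‖ ^ r.toReal) ^ (1 / r.toReal) := by
          rw [one_div, Real.rpow_rpow_inv (norm_nonneg _) hr.ne']
      _ ≤ (‖z‖ ^ r.toReal + C ^ r.toReal) ^ (1 / r.toReal) :=
          Real.rpow_le_rpow (Real.rpow_nonneg (norm_nonneg _) _) h3 (by positivity)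
  have hdec : z + u n = (trunc r M z + (u n - trunc r M (u n)))
      + (z - trunc r M z) + trunc r M (u n) := by abel
  calc ‖z + u n‖ ≤ ‖trunc r M z + (u n - trunc r M (u n))‖ + ‖z - trunc r M z‖
        + ‖trunc r M (u n)‖ := by rw [hdec]; exact norm_add₃_le
    _ ≤ (‖z‖ ^ r.toReal + C ^ r.toReal) ^ (1 / r.toReal) + η + η := by
        gcongr
    _ = (‖z‖ ^ r.toReal + C ^ r.toReal) ^ (1 / r.toReal) + 2 * η := by ring

/-- Lower `ℓ^r` estimate: adding a coordinatewise-null sequence. -/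
lemma eventually_le_norm_add (hr : 0 < r.toReal) (z : L r) {v : ℕ → L r}
    (hv : ∀ i, Tendsto (fun n => v n i) atTop (𝓝 (0 : ℝ))) {η : ℝ} (hη : 0 < η) :
    ∀ᶠ n in atTop,
      (max (‖z‖ - η) 0 ^ r.toReal + max (‖v n‖ - η) 0 ^ r.toReal) ^ (1 / r.toReal) - 2 * η
        ≤ ‖z + v n‖ := by
  obtain ⟨M, hM⟩ := exists_norm_sub_trunc_le hr z hη
  have hev : ∀ᶠ n in atTop, ‖trunc r M (v n)‖ ≤ η :=
    (tendsto_norm_trunc hr M hv).eventually (eventually_le_nhds hη)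
  filter_upwards [hev] with n hn
  have hdisj := norm_add_rpow_of_disjoint hr (trunc r M z) (v n - trunc r M (v n))
    (disjoint_trunc_tail M z (v n))
  have h1 : max (‖z‖ - η) 0 ≤ ‖trunc r M z‖ := by
    refine max_le ?_ (norm_nonneg _)
    have : ‖z‖ ≤ ‖trunc r M z‖ + ‖z - trunc r M z‖ := by
      calc ‖z‖ = ‖trunc r M z + (z - trunc r M z)‖ := by congr 1; abel
        _ ≤ _ := norm_add_le _ _
    linarith
  have h2 : max (‖v n‖ - η) 0 ≤ ‖v n - trunc r M (v n)‖ := by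
    refine max_le ?_ (norm_nonneg _)
    have : ‖v n‖ ≤ ‖v n - trunc r M (v n)‖ + ‖trunc r M (v n)‖ := by
      calc ‖v n‖ = ‖(v n - trunc r M (v n)) + trunc r M (v n)‖ := by congr 1; abel
        _ ≤ _ := norm_add_le _ _
    linarith
  have key : (max (‖z‖ - η) 0 ^ r.toReal + max (‖v n‖ - η) 0 ^ r.toReal) ^ (1 / r.toReal)
      ≤ ‖trunc r M z + (v n - trunc r M (v n))‖ := by
    have h3 : max (‖z‖ - η) 0 ^ r.toReal + max (‖v n‖ - η) 0 ^ r.toReal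
        ≤ ‖trunc r M z + (v n - trunc r M (v n))‖ ^ r.toReal := by
      rw [hdisj]
      exact add_le_add (Real.rpow_le_rpow (le_max_right _ _) h1 hr.le)
        (Real.rpow_le_rpow (le_max_right _ _) h2 hr.le)
    calc (max (‖z‖ - η) 0 ^ r.toReal + max (‖v n‖ - η) 0 ^ r.toReal) ^ (1 / r.toReal)
        ≤ (‖trunc r M z + (v n - trunc r M (v n))‖ ^ r.toReal) ^ (1 / r.toReal) :=
          Real.rpow_le_rpow (by positivity) h3 (by positivity)
      _ = _ := by rw [one_div, Real.rpow_rpow_inv (norm_nonneg _) hr.ne']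
  have hdec : trunc r M z + (v n - trunc r M (v n)) = (z + v n)
      - (z - trunc r M z) - trunc r M (v n) := by abel
  have : ‖trunc r M z + (v n - trunc r M (v n))‖ ≤ ‖z + v n‖ + η + η := by
    rw [hdec]
    calc ‖z + v n - (z - trunc r M z) - trunc r M (v n)‖
        ≤ ‖z + v n - (z - trunc r M z)‖ + ‖trunc r M (v n)‖ := norm_sub_le _ _
      _ ≤ (‖z + v n‖ + ‖z - trunc r M z‖) + η := by
          gcongr; exact norm_sub_le _ _
      _ ≤ ‖z + v n‖ + η + η := by gcongr
  linarith

end Trunc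

/-- helper: `(C·N^(1/r))^r + C^r = (C·(N+1)^(1/r))^r`, in `(·)^(1/r)` form. -/
lemma pow_step {C rr : ℝ} (hC : 0 ≤ C) (hrr : 0 < rr) (N : ℕ) :
    ((C * (N:ℝ) ^ (1/rr)) ^ rr + C ^ rr) ^ (1/rr) = C * ((N:ℝ) + 1) ^ (1/rr) := by
  have h1 : (C * (N:ℝ) ^ (1/rr)) ^ rr = C ^ rr * (N:ℝ) := by
    rw [Real.mul_rpow hC (Real.rpow_nonneg (Nat.cast_nonneg N) _), one_div,
      Real.rpow_inv_rpow (Nat.cast_nonneg N) hrr.ne']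
  rw [h1, show C ^ rr * (N:ℝ) + C ^ rr = C ^ rr * ((N:ℝ) + 1) by ring,
    Real.mul_rpow (Real.rpow_nonneg hC _) (by positivity), one_div,
    Real.rpow_rpow_inv hC hrr.ne']

/-- The core gliding-hump argument. -/
lemma core {p q : ℝ≥0∞} [Fact (1 ≤ p)] [Fact (1 ≤ q)] (hp : p ≠ ⊤) (hq : q ≠ ⊤) (hqp : q < p)
    (T : (L p) →L[ℝ] (L q)) {u : ℕ → L p} {C ε : ℝ}
    (hC : 0 ≤ C) (hCu : ∀ n, ‖u n‖ ≤ C)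
    (hu0 : ∀ i, Tendsto (fun n => u n i) atTop (𝓝 (0:ℝ)))
    (hTu0 : ∀ i, Tendsto (fun n => T (u n) i) atTop (𝓝 (0:ℝ)))
    (hε : 0 < ε) (hTu : ∀ n, ε ≤ ‖T (u n)‖) : False := by
  set pp := p.toReal with hpdef
  set qq := q.toReal with hqdef
  have hpp1 : 1 ≤ pp := by
    rw [hpdef, ← ENNReal.toReal_one]
    exact ENNReal.toReal_mono hp (Fact.out)
  have hqq1 : 1 ≤ qq := by
    rw [hqdef, ← ENNReal.toReal_one]
    exact ENNReal.toReal_mono hq (Fact.out)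
  have hpp : 0 < pp := lt_of_lt_of_le one_pos hpp1
  have hqq : 0 < qq := lt_of_lt_of_le one_pos hqq1
  have hqqpp : qq < pp := by
    rw [hpdef, hqdef]
    exact (ENNReal.toReal_lt_toReal hq hp).mpr hqp
  set δ : ℝ := ε / 100 with hδdef
  have hδ : 0 < δ := by positivity
  set η : ℕ → ℝ := fun k => δ * (1/2) ^ k with hηdef
  have hη : ∀ k, 0 < η k := fun k => by positivity
  have hηδ : ∀ k, η k ≤ δ := by
    intro k
    have : ((1:ℝ)/2) ^ k ≤ 1 := pow_le_one₀ (by norm_num) (by norm_num)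
    calc η k = δ * (1/2)^k := rfl
      _ ≤ δ * 1 := by nlinarith
      _ = δ := mul_one δ
  set E : ℕ → ℝ := fun N => ∑ k ∈ Finset.range N, η k with hEdef
  have hE0 : E 0 = 0 := by simp [hEdef]
  have hEsucc : ∀ N, E (N+1) = E N + η N := fun N => Finset.sum_range_succ _ _
  have hEnonneg : ∀ N, 0 ≤ E N := fun N => Finset.sum_nonneg fun k _ => (hη k).le
  have hE2δ : ∀ N, E N ≤ 2 * δ := by
    intro N
    have : E N = δ * ∑ k ∈ Finset.range N, (1/2:ℝ)^k := by
      rw [hEdef, Finset.mul_sum]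
    rw [this]
    have h2 := sum_geometric_two_le N
    nlinarith
  -- step choice
  have hstep : ∀ (N : ℕ) (z : L p), ∃ n : ℕ,
      ‖z + u n‖ ≤ (‖z‖ ^ pp + C ^ pp) ^ (1/pp) + 2 * η N ∧
      (max (‖T z‖ - η N) 0 ^ qq + max (‖T (u n)‖ - η N) 0 ^ qq) ^ (1/qq) - 2 * η N
        ≤ ‖T z + T (u n)‖ := by
    intro N z
    have hA := eventually_norm_add_le hpp z hC hCu hu0 (hη N)
    have hB := eventually_le_norm_add hqq (T z) (v := fun n => T (u n)) hTu0 (hη N)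
    exact (hA.and hB).exists
  -- the recursively defined sums
  obtain ⟨S, hS0, hSspec⟩ : ∃ S : ℕ → L p, S 0 = 0 ∧ ∀ N, ∃ n : ℕ,
      S (N+1) = S N + u n ∧
      ‖S N + u n‖ ≤ (‖S N‖ ^ pp + C ^ pp) ^ (1/pp) + 2 * η N ∧
      (max (‖T (S N)‖ - η N) 0 ^ qq + max (‖T (u n)‖ - η N) 0 ^ qq) ^ (1/qq) - 2 * η N
        ≤ ‖T (S N) + T (u n)‖ := by
    refine ⟨fun N => Nat.rec (0 : L p) (fun N z => z + u (Classical.choose (hstep N z))) N,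
      rfl, fun N => ⟨Classical.choose (hstep N _), rfl, Classical.choose_spec (hstep N _)⟩⟩
  -- upper invariant
  have hSA : ∀ N : ℕ, ‖S N‖ ≤ C * (N:ℝ) ^ (1/pp) + 2 * E N := by
    intro N
    induction N with
    | zero =>
      rw [hS0, hE0, norm_zero]
      push_cast
      rw [Real.zero_rpow (by positivity : (1:ℝ)/pp ≠ 0)]
      norm_num
    | succ N ih =>
      obtain ⟨n, hSn, specA, -⟩ := hSspec N
      have h1 : ‖S (N+1)‖ ≤ (‖S N‖ ^ pp + C ^ pp) ^ (1/pp) + 2 * η N := by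
        rw [hSn]; exact specA
      have h2 : (‖S N‖ ^ pp + C ^ pp) ^ (1/pp)
          ≤ ((C * (N:ℝ) ^ (1/pp) + 2 * E N) ^ pp + C ^ pp) ^ (1/pp) := by
        apply Real.rpow_le_rpow (by positivity)
        · exact add_le_add_left (Real.rpow_le_rpow (norm_nonneg _) ih hpp.le) _
        · positivity
      have h3 : ((C * (N:ℝ) ^ (1/pp) + 2 * E N) ^ pp + C ^ pp) ^ (1/pp)
          ≤ ((C * (N:ℝ) ^ (1/pp)) ^ pp + C ^ pp) ^ (1/pp) + 2 * E N :=
        rpow_lip hpp1 (Real.rpow_nonneg hC _) (by positivity) (by positivity)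
      have h4 := pow_step hC hpp N
      have hcast : ((N:ℝ) + 1) = ((N+1 : ℕ) : ℝ) := by push_cast; ring
      rw [hEsucc]
      calc ‖S (N+1)‖ ≤ ((C * (N:ℝ) ^ (1/pp)) ^ pp + C ^ pp) ^ (1/pp) + 2 * E N + 2 * η N := by
            linarith
        _ = C * ((N+1:ℕ):ℝ) ^ (1/pp) + 2 * E N + 2 * η N := by rw [h4, hcast]
        _ = C * ((N+1:ℕ):ℝ) ^ (1/pp) + 2 * (E N + η N) := by ring
  -- lower invariant
  have hSB : ∀ N : ℕ, (ε/2) * (N:ℝ) ^ (1/qq) - 3 * E N ≤ ‖T (S N)‖ := by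
    intro N
    induction N with
    | zero =>
      rw [hS0, hE0, map_zero, norm_zero]
      push_cast
      rw [Real.zero_rpow (by positivity : (1:ℝ)/qq ≠ 0)]
      norm_num
    | succ N ih =>
      obtain ⟨n, hSn, -, specB⟩ := hSspec N
      have hTS : T (S (N+1)) = T (S N) + T (u n) := by rw [hSn, map_add]
      obtain ⟨b, hbdef⟩ : ∃ b : ℝ, b = ‖T (S N)‖ := ⟨_, rfl⟩
      obtain ⟨y, hydef⟩ : ∃ y : ℝ, y = 3 * E N + η N := ⟨_, rfl⟩
      have hy : 0 ≤ y := by rw [hydef]; have := hEnonneg N; have := (hη N).le; linarith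
      obtain ⟨x, hxdef⟩ : ∃ x : ℝ, x = max ((ε/2) * (N:ℝ) ^ (1/qq) - y) 0 := ⟨_, rfl⟩
      have hx : 0 ≤ x := hxdef ▸ le_max_right _ _
      have hxy : (ε/2) * (N:ℝ) ^ (1/qq) ≤ x + y := by
        have : (ε/2) * (N:ℝ) ^ (1/qq) - y ≤ x := hxdef ▸ le_max_left _ _
        linarith
      have hβx : x ≤ max (b - η N) 0 := by
        rw [hxdef]
        apply max_le
        · have : (ε/2) * (N:ℝ) ^ (1/qq) - y ≤ b - η N := by
            rw [hydef, hbdef]; linarith [ih]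
          exact this.trans (le_max_left _ _)
        · exact le_max_right _ _
      have hε2 : ε/2 ≤ max (‖T (u n)‖ - η N) 0 := by
        have h1 : ε/2 ≤ ‖T (u n)‖ - η N := by
          have := hTu n; have := hηδ N; rw [hδdef] at *; linarith
        exact h1.trans (le_max_left _ _)
      -- lower bound chain
      have hb1 : (x ^ qq + (ε/2) ^ qq) ^ (1/qq) - 2 * η N ≤ ‖T (S (N+1))‖ := by
        rw [hTS]
        refine le_trans ?_ specB
        have hmono : (x ^ qq + (ε/2) ^ qq) ^ (1/qq)
            ≤ (max (‖T (S N)‖ - η N) 0 ^ qq + max (‖T (u n)‖ - η N) 0 ^ qq) ^ (1/qq) := by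
          apply Real.rpow_le_rpow (by positivity) _ (by positivity)
          exact add_le_add (Real.rpow_le_rpow hx (hbdef ▸ hβx) hqq.le)
            (Real.rpow_le_rpow (by positivity) hε2 hqq.le)
        linarith
      have hb2 : (ε/2) * ((N:ℝ) + 1) ^ (1/qq) - y ≤ (x ^ qq + (ε/2) ^ qq) ^ (1/qq) := by
        have hl := rpow_lip hqq1 (by positivity : (0:ℝ) ≤ (ε/2) ^ qq) hx hy
        have hg : ((ε/2) * (N:ℝ) ^ (1/qq)) ^ qq ≤ (x + y) ^ qq :=
          Real.rpow_le_rpow (by positivity) hxy hqq.le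
        have hgs : ((ε/2) * (N:ℝ) ^ (1/qq)) ^ qq = (ε/2) ^ qq * (N:ℝ) := by
          rw [Real.mul_rpow (by positivity) (Real.rpow_nonneg (Nat.cast_nonneg N) _), one_div,
            Real.rpow_inv_rpow (Nat.cast_nonneg N) hqq.ne']
        have h5 : ((ε/2) ^ qq * (N:ℝ) + (ε/2) ^ qq) ^ (1/qq)
            ≤ ((x + y) ^ qq + (ε/2) ^ qq) ^ (1/qq) := by
          apply Real.rpow_le_rpow (by positivity) _ (by positivity)
          rw [← hgs]; linarith
        have h6 : ((ε/2) ^ qq * (N:ℝ) + (ε/2) ^ qq) ^ (1/qq) = (ε/2) * ((N:ℝ)+1) ^ (1/qq) := by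
          have := pow_step (by positivity : (0:ℝ) ≤ ε/2) hqq N
          rw [← this, hgs]
        linarith
      have hcast : ((N:ℝ) + 1) = ((N+1 : ℕ) : ℝ) := by push_cast; ring
      rw [hEsucc]
      have : (ε/2) * ((N+1:ℕ):ℝ) ^ (1/qq) - y - 2 * η N ≤ ‖T (S (N+1))‖ := by
        rw [← hcast]; linarith
      rw [hydef] at this
      calc (ε/2) * ((N+1:ℕ):ℝ) ^ (1/qq) - 3 * (E N + η N)
          = (ε/2) * ((N+1:ℕ):ℝ) ^ (1/qq) - (3 * E N + η N) - 2 * η N := by ring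
        _ ≤ ‖T (S (N+1))‖ := this
  -- the contradiction
  obtain ⟨N, hN⟩ := exists_nat_big (a := ε/2) (c := ‖T‖ * C) (d := 4 * δ * ‖T‖ + 6 * δ)
    (by positivity) (by positivity : 0 < 1/pp)
    (one_div_lt_one_div_of_lt hqq hqqpp)
  obtain ⟨W, hW⟩ : ∃ W : ℝ, W = ‖T‖ := ⟨_, rfl⟩
  obtain ⟨A, hA⟩ : ∃ A : ℝ, A = ‖S N‖ := ⟨_, rfl⟩
  obtain ⟨B, hB⟩ : ∃ B : ℝ, B = ‖T (S N)‖ := ⟨_, rfl⟩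
  obtain ⟨X, hX⟩ : ∃ X : ℝ, X = (N:ℝ) ^ (1/pp) := ⟨_, rfl⟩
  obtain ⟨Y, hY⟩ : ∃ Y : ℝ, Y = (N:ℝ) ^ (1/qq) := ⟨_, rfl⟩
  obtain ⟨Ee, hEe⟩ : ∃ Ee : ℝ, Ee = E N := ⟨_, rfl⟩
  have hb : (ε/2) * Y - 3 * Ee ≤ B := by rw [hB, hY, hEe]; exact hSB N
  have ha : A ≤ C * X + 2 * Ee := by rw [hA, hX, hEe]; exact hSA N
  have hTle : B ≤ W * A := by rw [hB, hW, hA]; exact T.le_opNorm _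
  have hTnorm : 0 ≤ W := hW ▸ norm_nonneg _
  have hAnn : 0 ≤ A := hA ▸ norm_nonneg _
  have hN' : W * C * X + (4 * δ * W + 6 * δ) < (ε/2) * Y := by
    rw [hW, hX, hY]; linarith [hN]
  have h3 : 0 ≤ Ee := hEe ▸ hEnonneg N
  have h2 : Ee ≤ 2 * δ := hEe ▸ hE2δ N
  nlinarith [mul_le_mul_of_nonneg_left ha hTnorm, mul_le_mul_of_nonneg_left h2 hTnorm]

end PittAux

open PittAux

local notation "L" r => lp (fun _ : ℕ => ℝ) r

/-- Pitt's theorem: for `1 ≤ q < p < ∞`, every bounded operator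
`ℓ_p → ℓ_q` is compact. -/
theorem stmt_14 (p q : ℝ≥0∞) [Fact (1 ≤ p)] [Fact (1 ≤ q)]
    (hqp : q < p) (hp : p ≠ ⊤)
    (T : lp (fun _ : ℕ => ℝ) p →L[ℝ] lp (fun _ : ℕ => ℝ) q) :
    IsCompactOperator T := by
  have hq : q ≠ ⊤ := (hqp.trans_le le_top).ne
  have hp0 : p ≠ 0 := by
    have : (1:ℝ≥0∞) ≤ p := Fact.out
    intro h; rw [h] at this; exact (not_le.mpr zero_lt_one) this
  have hq0 : q ≠ 0 := by
    have : (1:ℝ≥0∞) ≤ q := Fact.out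
    intro h; rw [h] at this; exact (not_le.mpr zero_lt_one) this
  rw [show (⇑T : (L p) → L q) = ⇑(T.toLinearMap) from rfl]
  rw [isCompactOperator_iff_isCompact_closure_image_closedBall (𝕜₁ := ℝ) T.toLinearMap one_pos]
  apply IsSeqCompact.isCompact
  intro y hy
  -- approximate each `y n` by an element of the image
  have happrox : ∀ n : ℕ, ∃ x : L p, x ∈ closedBall (0 : L p) 1 ∧
      dist (y n) (T x) < 1/(n+1) := by
    intro n
    obtain ⟨z, hz, hdz⟩ := Metric.mem_closure_iff.mp (hy n) (1/(n+1)) (by positivity)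
    obtain ⟨x, hx, rfl⟩ := hz
    exact ⟨x, hx, hdz⟩
  choose x hxball hxdist using happrox
  -- extract a subsequence along which both `x` and `T x` converge coordinatewise
  set K : Set ((ℕ → ℝ) × (ℕ → ℝ)) :=
    (Set.univ.pi fun _ : ℕ => Set.Icc (-1:ℝ) 1) ×ˢ (Set.univ.pi fun _ : ℕ => Set.Icc (-‖T‖) ‖T‖)
    with hKdef
  have hK : IsCompact K :=
    (isCompact_univ_pi fun _ => isCompact_Icc).prod (isCompact_univ_pi fun _ => isCompact_Icc)
  have hgK : ∀ n, ((x n : ℕ → ℝ), (T (x n) : ℕ → ℝ)) ∈ K := by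
    intro n
    constructor
    · intro i _
      have h1 : ‖x n i‖ ≤ ‖x n‖ := lp.norm_apply_le_norm hp0 (x n) i
      have h2 : ‖x n‖ ≤ 1 := mem_closedBall_zero_iff.mp (hxball n)
      have := abs_le.mp (le_trans h1 h2)
      exact ⟨this.1, this.2⟩
    · intro i _
      have h1 : ‖T (x n) i‖ ≤ ‖T (x n)‖ := lp.norm_apply_le_norm hq0 (T (x n)) i
      have h2 : ‖T (x n)‖ ≤ ‖T‖ * ‖x n‖ := T.le_opNorm _
      have h3 : ‖x n‖ ≤ 1 := mem_closedBall_zero_iff.mp (hxball n)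
      have h4 : ‖T (x n) i‖ ≤ ‖T‖ := by
        have := mul_le_mul_of_nonneg_left h3 (norm_nonneg T)
        rw [mul_one] at this
        linarith
      have := abs_le.mp h4
      exact ⟨this.1, this.2⟩
  obtain ⟨⟨a, b⟩, -, φ, hφ, hconv⟩ :=
    hK.isSeqCompact (x := fun n => ((x n : ℕ → ℝ), (T (x n) : ℕ → ℝ))) hgK
  have hca : Tendsto (fun n => (x (φ n) : ℕ → ℝ)) atTop (𝓝 a) :=
    (continuous_fst.tendsto (a, b)).comp hconv
  have hcb : Tendsto (fun n => (T (x (φ n)) : ℕ → ℝ)) atTop (𝓝 b) :=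
    (continuous_snd.tendsto (a, b)).comp hconv
  have haco : ∀ i, Tendsto (fun n => x (φ n) i) atTop (𝓝 (a i)) :=
    fun i => ((continuous_apply i).tendsto a).comp hca
  have hbco : ∀ i, Tendsto (fun n => T (x (φ n)) i) atTop (𝓝 (b i)) :=
    fun i => ((continuous_apply i).tendsto b).comp hcb
  -- the image sequence is Cauchy
  have hcauchy : CauchySeq (fun n => T (x (φ n))) := by
    by_contra hnc
    rw [Metric.cauchySeq_iff] at hnc
    push_neg at hnc
    obtain ⟨ε, hε, hpair⟩ := hnc
    choose m hm k hk hd using hpair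
    have hmT : Tendsto m atTop atTop := tendsto_atTop_mono hm tendsto_id
    have hkT : Tendsto k atTop atTop := tendsto_atTop_mono hk tendsto_id
    refine core hp hq hqp T (u := fun j => x (φ (m j)) - x (φ (k j))) (C := 2) (ε := ε)
      (by norm_num) ?_ ?_ ?_ hε ?_
    · intro j
      have h1 : ‖x (φ (m j))‖ ≤ 1 := mem_closedBall_zero_iff.mp (hxball _)
      have h2 : ‖x (φ (k j))‖ ≤ 1 := mem_closedBall_zero_iff.mp (hxball _)
      calc ‖x (φ (m j)) - x (φ (k j))‖ ≤ ‖x (φ (m j))‖ + ‖x (φ (k j))‖ := norm_sub_le _ _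
        _ ≤ 2 := by linarith
    · intro i
      have h1 : Tendsto (fun j => x (φ (m j)) i) atTop (𝓝 (a i)) := (haco i).comp hmT
      have h2 : Tendsto (fun j => x (φ (k j)) i) atTop (𝓝 (a i)) := (haco i).comp hkT
      have := h1.sub h2
      rw [sub_self] at this
      refine this.congr fun j => ?_
      rw [lp.coeFn_sub]
      rfl
    · intro i
      have h1 : Tendsto (fun j => T (x (φ (m j))) i) atTop (𝓝 (b i)) := (hbco i).comp hmT
      have h2 : Tendsto (fun j => T (x (φ (k j))) i) atTop (𝓝 (b i)) := (hbco i).comp hkT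
      have := h1.sub h2
      rw [sub_self] at this
      refine this.congr fun j => ?_
      rw [map_sub, lp.coeFn_sub]
      rfl
    · intro j
      have := hd j
      rw [dist_eq_norm] at this
      rw [map_sub]
      exact this
  -- conclude
  obtain ⟨Z, hZ⟩ := cauchySeq_tendsto_of_complete hcauchy
  have hZmem : Z ∈ closure (⇑T.toLinearMap '' closedBall (0 : L p) 1) := by
    refine mem_closure_of_tendsto hZ (Eventually.of_forall fun n => ?_)
    have hmem : T (x (φ n)) ∈ ⇑T.toLinearMap '' closedBall (0 : L p) 1 :=
      ⟨x (φ n), hxball (φ n), rfl⟩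
    exact hmem
  refine ⟨Z, hZmem, φ, hφ, ?_⟩
  show Tendsto (y ∘ φ) atTop (𝓝 Z)
  have hdist0 : Tendsto (fun n => dist (T (x (φ n))) (y (φ n))) atTop (𝓝 0) := by
    apply squeeze_zero (fun n => dist_nonneg)
      (g := fun n : ℕ => 1/((n:ℝ)+1))
    · intro n
      rw [dist_comm]
      refine (hxdist (φ n)).le.trans ?_
      have : (n:ℝ) + 1 ≤ (φ n : ℝ) + 1 := by
        have hn : (n:ℝ) ≤ (φ n : ℝ) := Nat.cast_le.mpr hφ.le_apply
        linarith
      apply one_div_le_one_div_of_le (by positivity) this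
    · exact tendsto_one_div_add_atTop_nhds_zero_nat
  exact hZ.congr_dist hdist0
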